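/- For 0 ≤ k < N and integers k < j_k ≤ j_{k-1} ≤ ... ≤ j_1 ≤ N, the permutation τ_{(j_k,...,j_1)} := (k, k+1, ..., j_k) ⋯ (2, 3, ..., j_2)(1, 2, ..., j_1) ∈ S_N (product of cycles) belongs to Ξ_N, and every element of Ξ_N is of this form for a unique choice of k and (j_k, ..., j_1). -/

import Mathlib

/-- Ξ_N : permutations of `Fin N` mapping every initial segment (with ≥ 2
elements) to an interval. -/
def XiSet (N : ℕ) : Set (Equiv.Perm (Fin N)) :=
  {τ | ∀ k : Fin N, 0 < k.val →
    ∃ a b : Fin N, (Finset.Iic k).image τ = Finset.Icc a b}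

open Fin.NatCast in
/-- The cycle `(a, a+1, ..., b)` of `Fin N` (0-based), sending
`a ↦ a+1 ↦ ... ↦ b ↦ a`, written as the product of simple transpositions
`(a,a+1)(a+1,a+2)⋯(b-1,b)`. -/
def cyc (N : ℕ) [NeZero N] (a b : ℕ) : Equiv.Perm (Fin N) :=
  ((List.range (b - a)).map
    (fun i => Equiv.swap ((a + i : ℕ) : Fin N) ((a + i + 1 : ℕ) : Fin N))).prod

/-- Given a list `L = [e_{k-1}, e_{k-2}, ..., e_0]` of 0-based endpoints
(`e_s` the endpoint of the cycle starting at `s`, listed with decreasing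
starting point), the permutation
`τ_{(j_k,...,j_1)} = (k,k+1,...,j_k) ⋯ (2,3,...,j_2)(1,2,...,j_1)`
in 0-based form: the product of the cycles `(s, s+1, ..., e_s)` for
`s = k-1` down to `s = 0`. -/
def tauOfList (N : ℕ) [NeZero N] (L : List ℕ) : Equiv.Perm (Fin N) :=
  (L.zipIdx.map (fun p => cyc N (L.length - 1 - p.2) p.1)).prod

/-- The admissibility conditions on the data `(k; j_k ≤ j_{k-1} ≤ ... ≤ j_1)`:
in 0-based terms `L` has length `k < N`, is nondecreasing (`j_k ≤ ... ≤ j_1`),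
its entries are `< N` (`j_i ≤ N`), and the first endpoint exceeds its starting
point (`k < j_k`). -/
def GoodList (N : ℕ) (L : List ℕ) : Prop :=
  L.length < N ∧ L.Pairwise (· ≤ ·) ∧ (∀ x ∈ L, x < N) ∧
    ∀ h : L ≠ [], L.length - 1 < L.head h

open Fin.NatCast


/-! ### Auxiliary machinery -/

/-- ℕ-level model of the elementary step of `cyc`. -/
def stp (a b x : ℕ) : ℕ := if x = b then a else if a ≤ x ∧ x < b then x + 1 else x

/-- ℕ-level model of `tauOfList`. -/
def G : List ℕ → ℕ → ℕ
  | [], m => m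
  | e :: M, m => stp M.length e (G M m)

def posF : List ℕ → Finset ℕ
  | [] => ∅
  | e :: M => insert (e - M.length) (posF M)

def cnt (L : List ℕ) (m : ℕ) : ℕ := ((posF L).filter (· ≤ m)).card

def g (L : List ℕ) (m : ℕ) : ℕ :=
  if m ∈ posF L then L.length - cnt L m else m + L.length - cnt L m

def Hyp (L : List ℕ) : Prop := L.Pairwise (· ≤ ·) ∧ ∀ h : L ≠ [], L.length - 1 < L.head h

lemma cyc_succ (N : ℕ) [NeZero N] (a d : ℕ) :
    cyc N a (a + d + 1) = cyc N a (a + d) * Equiv.swap ((a + d : ℕ) : Fin N) ((a + d + 1 : ℕ) : Fin N) := by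
  unfold cyc
  have h1 : a + d + 1 - a = d + 1 := by omega
  have h2 : a + d - a = d := by omega
  rw [h1, h2, List.range_succ, List.map_append, List.prod_append, List.map_singleton,
    List.prod_singleton]

lemma cyc_apply (N : ℕ) [NeZero N] (a b : ℕ) (hab : a ≤ b) (hb : b < N)
    (x : ℕ) (hx : x < N) : (cyc N a b ⟨x, hx⟩ : ℕ) = stp a b x := by
  obtain ⟨d, rfl⟩ : ∃ d, b = a + d := ⟨b - a, by omega⟩
  clear hab
  induction d generalizing x with
  | zero =>
    have h0 : cyc N a (a+0) = 1 := by unfold cyc; simp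
    rw [h0]
    simp only [Equiv.Perm.one_apply, stp]
    split
    · omega
    · split <;> omega
  | succ d ih =>
    have hb' : a + d + 1 < N := by omega
    have hrw : a + (d + 1) = a + d + 1 := by omega
    rw [hrw] at hb ⊢
    rw [cyc_succ]
    have had : a + d < N := by omega
    have hcast1 : ((a + d : ℕ) : Fin N) = ⟨a + d, had⟩ := by
      ext; rw [Fin.val_natCast]; exact Nat.mod_eq_of_lt had
    have hcast2 : ((a + d + 1 : ℕ) : Fin N) = ⟨a + d + 1, hb'⟩ := by
      ext; rw [Fin.val_natCast]; exact Nat.mod_eq_of_lt hb'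
    rw [hcast1, hcast2]
    simp only [Equiv.Perm.mul_apply]
    rcases eq_or_ne x (a + d) with rfl | h1
    · rw [show (⟨a+d, hx⟩ : Fin N) = ⟨a+d, had⟩ from rfl, Equiv.swap_apply_left, ih _ hb' had]
      simp only [stp]
      split_ifs <;> omega
    rcases eq_or_ne x (a + d + 1) with rfl | h2
    · rw [show (⟨a+d+1, hx⟩ : Fin N) = ⟨a+d+1, hb'⟩ from rfl, Equiv.swap_apply_right, ih _ had had]
      simp only [stp]
      split_ifs <;> omega
    · rw [Equiv.swap_apply_of_ne_of_ne (by simp [Fin.ext_iff, h1]) (by simp [Fin.ext_iff, h2]),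
        ih _ hx had]
      simp only [stp]
      split_ifs <;> omega

lemma enum_shift (N : ℕ) [NeZero N] (M : List ℕ) : ∀ j : ℕ,
    ((M.zipIdx j).map (fun p => cyc N (j + M.length - 1 - p.2) p.1))
      = M.zipIdx.map (fun p => cyc N (M.length - 1 - p.2) p.1) := by
  induction M with
  | nil => intro j; simp
  | cons x M ih =>
    intro j
    simp only [List.zipIdx_cons, List.map_cons, List.length_cons]
    congr 1
    · congr 1
      omega
    · have h1 : (fun (p : ℕ × ℕ) => cyc N (j + (M.length + 1) - 1 - p.2) p.1)
          = (fun p => cyc N ((j+1) + M.length - 1 - p.2) p.1) := by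
        funext p; congr 1; omega
      have h2 : (fun (p : ℕ × ℕ) => cyc N (M.length + 1 - 1 - p.2) p.1)
          = (fun p => cyc N (1 + M.length - 1 - p.2) p.1) := by
        funext p; congr 1; omega
      rw [h1, h2, ih (j+1), ih 1]

lemma tau_cons (N : ℕ) [NeZero N] (e : ℕ) (M : List ℕ) :
    tauOfList N (e :: M) = cyc N M.length e * tauOfList N M := by
  unfold tauOfList
  simp only [List.zipIdx_cons, List.map_cons, List.prod_cons, List.length_cons]
  rw [show M.length + 1 - 1 - 0 = M.length by omega]
  congr 1
  have h : (fun (p : ℕ × ℕ) => cyc N (M.length + 1 - 1 - p.2) p.1)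
      = (fun p => cyc N (1 + M.length - 1 - p.2) p.1) := by
    funext p; congr 1; omega
  rw [h, enum_shift N M 1]

lemma hyp_cons {e : ℕ} {M : List ℕ} (h : Hyp (e :: M)) :
    Hyp M ∧ M.length < e ∧ ∀ y ∈ M, e ≤ y := by
  obtain ⟨hs, hh⟩ := h
  rw [List.pairwise_cons] at hs
  have he : M.length < e := by
    have := hh (by simp)
    simpa using this
  refine ⟨⟨hs.2, ?_⟩, he, hs.1⟩
  intro hM
  match M, hM with
  | f :: M', _ =>
    have : e ≤ f := hs.1 f (by simp)
    simp only [List.head_cons, List.length_cons]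
    simp at he
    omega

lemma pos_lb : ∀ (M : List ℕ), M.Pairwise (· ≤ ·) → ∀ e, (∀ y ∈ M, e ≤ y) → M.length < e →
    ∀ p ∈ posF M, e - M.length < p := by
  intro M
  induction M with
  | nil => intro _ e _ _ p hp; simp [posF] at hp
  | cons f M' ih =>
    intro hs e hmono hlen p hp
    rw [List.pairwise_cons] at hs
    simp only [posF, Finset.mem_insert] at hp
    have hef : e ≤ f := hmono f (by simp)
    simp only [List.length_cons] at hlen ⊢
    rcases hp with rfl | hp
    · omega
    · have := ih hs.2 e (fun y hy => hmono y (by simp [hy])) (by omega) p hp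
      omega

lemma pos_pos {L : List ℕ} (h : Hyp L) : ∀ p ∈ posF L, 0 < p := by
  match L with
  | [] => intro p hp; simp [posF] at hp
  | e :: M =>
    intro p hp
    obtain ⟨hM, he, hmono⟩ := hyp_cons h
    simp only [posF, Finset.mem_insert] at hp
    rcases hp with rfl | hp
    · omega
    · have := pos_lb M hM.1 e hmono he p hp
      omega

lemma pos_ub {N : ℕ} : ∀ {L : List ℕ}, (∀ x ∈ L, x < N) → ∀ p ∈ posF L, p < N := by
  intro L
  induction L with
  | nil => intro _ p hp; simp [posF] at hp
  | cons e M ih =>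
    intro hL p hp
    simp only [posF, Finset.mem_insert] at hp
    rcases hp with rfl | hp
    · have := hL e (by simp); omega
    · exact ih (fun x hx => hL x (by simp [hx])) p hp

lemma cnt_le_of_hyp {L : List ℕ} (h : Hyp L) (m : ℕ) : cnt L m ≤ m := by
  have hsub : (posF L).filter (· ≤ m) ⊆ Finset.Icc 1 m := by
    intro p hp
    simp only [Finset.mem_filter] at hp
    simp only [Finset.mem_Icc]
    exact ⟨pos_pos h p hp.1, hp.2⟩
  have := Finset.card_le_card hsub
  rw [Nat.card_Icc] at this
  unfold cnt
  omega

lemma G_eq_g : ∀ (L : List ℕ), Hyp L → ∀ m, G L m = g L m := by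
  intro L
  induction L with
  | nil => intro _ m; simp [G, g, posF, cnt]
  | cons e M ih =>
    intro h m
    obtain ⟨hM, hae, hmono⟩ := hyp_cons h
    set a := M.length with ha
    have hlb := pos_lb M hM.1 e hmono hae
    have hnot : e - a ∉ posF M := fun hmem => absurd (hlb _ hmem) (lt_irrefl _)
    have hGg : G (e :: M) m = stp a e (g M m) := by
      simp only [G, ih hM m]; rfl
    have hposF : posF (e :: M) = insert (e - a) (posF M) := rfl
    have hcnt : cnt (e :: M) m = (if e - a ≤ m then 1 else 0) + cnt M m := by
      unfold cnt
      rw [hposF, Finset.filter_insert]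
      split_ifs with hle
      · rw [Finset.card_insert_of_notMem (fun hc => hnot (Finset.mem_filter.mp hc).1)]
        omega
      · omega
    by_cases hmem : m ∈ posF M
    · -- case 1
      have hc1 : 1 ≤ cnt M m := by
        have : m ∈ (posF M).filter (· ≤ m) := Finset.mem_filter.mpr ⟨hmem, le_refl m⟩
        have := Finset.card_pos.mpr ⟨m, this⟩
        unfold cnt; omega
      have ha1 : 1 ≤ a := by
        match M, hmem with
        | f :: M', _ => simp [ha]
      have hgm : g M m = a - cnt M m := by simp [g, hmem, ha]
      have hmgt : e - a < m := hlb m hmem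
      rw [hGg, hgm]
      have : stp a e (a - cnt M m) = a - cnt M m := by
        simp only [stp]; split_ifs <;> omega
      rw [this]
      have hmem' : m ∈ posF (e :: M) := by rw [hposF]; exact Finset.mem_insert_of_mem hmem
      simp only [g, if_pos hmem', hcnt, List.length_cons]
      rw [if_pos (by omega)]
      omega
    · by_cases hme : m = e - a
      · -- case 2
        have hc0 : cnt M m = 0 := by
          unfold cnt
          rw [Finset.card_eq_zero, Finset.filter_eq_empty_iff]
          intro p hp
          have := hlb p hp
          omega
        have hgm : g M m = e := by
          unfold g
          rw [if_neg hmem, hc0, ← ha]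
          omega
        rw [hGg, hgm]
        have : stp a e e = a := by simp [stp]
        rw [this]
        have hmem' : m ∈ posF (e :: M) := by rw [hposF, hme]; exact Finset.mem_insert_self _ _
        simp only [g, if_pos hmem', hcnt, List.length_cons]
        rw [if_pos (by omega)]
        omega
      · by_cases hlt : m < e - a
        · -- case 3a
          have hc0 : cnt M m = 0 := by
            unfold cnt
            rw [Finset.card_eq_zero, Finset.filter_eq_empty_iff]
            intro p hp
            have := hlb p hp
            omega
          have hgm : g M m = m + a := by
            unfold g
            rw [if_neg hmem, hc0, ← ha]
            omega
          rw [hGg, hgm]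
          have : stp a e (m + a) = m + a + 1 := by
            simp only [stp]; split_ifs <;> omega
          rw [this]
          have hmem' : m ∉ posF (e :: M) := by
            rw [hposF, Finset.mem_insert]
            push_neg
            exact ⟨hme, hmem⟩
          simp only [g, if_neg hmem', hcnt, List.length_cons]
          rw [if_neg (by omega)]
          omega
        · -- case 3b : m > e - a
          have hgt : e - a < m := by omega
          have hc : cnt M m < m - (e - a) := by
            have hsub : (posF M).filter (· ≤ m) ⊆ Finset.Icc (e - a + 1) m := by
              intro p hp
              simp only [Finset.mem_filter] at hp
              simp only [Finset.mem_Icc]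
              exact ⟨hlb p hp.1, hp.2⟩
            have hrfl : cnt M m = ((posF M).filter (· ≤ m)).card := rfl
            have hcard := Finset.card_le_card hsub
            rw [Nat.card_Icc] at hcard
            rcases Nat.lt_or_ge (cnt M m) (m - (e - a)) with h' | h'
            · exact h'
            · exfalso
              have heq : (posF M).filter (· ≤ m) = Finset.Icc (e - a + 1) m := by
                apply Finset.eq_of_subset_of_card_le hsub
                rw [Nat.card_Icc, ← hrfl]
                omega
              have : m ∈ (posF M).filter (· ≤ m) := by
                rw [heq]
                simp only [Finset.mem_Icc]
                omega
              exact hmem (Finset.mem_filter.mp this).1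
          have hgm : g M m = m + a - cnt M m := by simp [g, hmem, ha]
          rw [hGg, hgm]
          have : stp a e (m + a - cnt M m) = m + a - cnt M m := by
            simp only [stp]; split_ifs <;> omega
          rw [this]
          have hmem' : m ∉ posF (e :: M) := by
            rw [hposF, Finset.mem_insert]
            push_neg
            exact ⟨hme, hmem⟩
          simp only [g, if_neg hmem', hcnt, List.length_cons]
          rw [if_pos (by omega)]
          have := cnt_le_of_hyp hM m
          omega

lemma G_lt {N : ℕ} : ∀ (L : List ℕ), Hyp L → (∀ x ∈ L, x < N) → ∀ m, m < N → G L m < N := by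
  intro L
  induction L with
  | nil => intro _ _ m hm; exact hm
  | cons e M ih =>
    intro h hx m hm
    obtain ⟨hM, hae, _⟩ := hyp_cons h
    have he : e < N := hx e (by simp)
    have hG := ih hM (fun x h' => hx x (by simp [h'])) m hm
    simp only [G, stp]
    split_ifs <;> omega

lemma tau_apply (N : ℕ) [NeZero N] : ∀ (L : List ℕ), Hyp L → (∀ x ∈ L, x < N) →
    ∀ m (hm : m < N), (tauOfList N L ⟨m, hm⟩ : ℕ) = G L m := by
  intro L
  induction L with
  | nil =>
    intro _ _ m hm
    have : tauOfList N [] = 1 := by unfold tauOfList; simp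
    rw [this]
    rfl
  | cons e M ih =>
    intro h hx m hm
    obtain ⟨hM, hae, _⟩ := hyp_cons h
    have he : e < N := hx e (by simp)
    have hGM := G_lt M hM (fun x h' => hx x (by simp [h'])) m hm
    rw [tau_cons]
    simp only [Equiv.Perm.mul_apply]
    have h1 : tauOfList N M ⟨m, hm⟩ = ⟨G M m, hGM⟩ := by
      ext
      exact ih hM (fun x h' => hx x (by simp [h'])) m hm
    rw [h1, cyc_apply N M.length e (by omega) he _ hGM]
    rfl

lemma posF_card {L : List ℕ} (h : Hyp L) : (posF L).card = L.length := by
  match L with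
  | [] => rfl
  | e :: M =>
    obtain ⟨hM, hae, hmono⟩ := hyp_cons h
    have hnot : e - M.length ∉ posF M :=
      fun hmem => absurd (pos_lb M hM.1 e hmono hae _ hmem) (lt_irrefl _)
    show (insert (e - M.length) (posF M)).card = M.length + 1
    rw [Finset.card_insert_of_notMem hnot, posF_card hM]

lemma cnt_mono {L : List ℕ} {m m' : ℕ} (h : m' ≤ m) : cnt L m' ≤ cnt L m := by
  apply Finset.card_le_card
  intro p hp
  simp only [Finset.mem_filter] at hp ⊢
  exact ⟨hp.1, le_trans hp.2 h⟩

lemma cnt_diff {L : List ℕ} {m m' : ℕ} (h : m' ≤ m) : cnt L m ≤ cnt L m' + (m - m') := by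
  have hsub : (posF L).filter (· ≤ m) ⊆ (posF L).filter (· ≤ m') ∪ Finset.Icc (m' + 1) m := by
    intro p hp
    simp only [Finset.mem_filter] at hp
    simp only [Finset.mem_union, Finset.mem_filter, Finset.mem_Icc]
    rcases le_or_gt p m' with h' | h'
    · exact Or.inl ⟨hp.1, h'⟩
    · exact Or.inr ⟨h', hp.2⟩
  calc cnt L m ≤ _ := Finset.card_le_card hsub
    _ ≤ cnt L m' + (Finset.Icc (m' + 1) m).card := Finset.card_union_le _ _
    _ ≤ cnt L m' + (m - m') := by rw [Nat.card_Icc]; omega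

theorem part_A (N : ℕ) [NeZero N] (L : List ℕ) (hL : GoodList N L) :
    tauOfList N L ∈ XiSet N := by
  obtain ⟨hlen, hsort, hltN, hhead⟩ := hL
  have hHyp : Hyp L := ⟨hsort, hhead⟩
  set τ := tauOfList N L with hτ
  intro kf hkf
  set m := kf.val with hmv
  have hm : m < N := kf.isLt
  set k := L.length with hk
  set c := cnt L m with hc
  have hcm : c ≤ m := cnt_le_of_hyp hHyp m
  have hck : c ≤ k := by
    have h1 : c ≤ (posF L).card := Finset.card_filter_le _ _
    rw [posF_card hHyp] at h1
    exact h1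
  -- the upper bound is < N
  have hbN : k + m - c < N := by
    have hpart := Finset.card_filter_add_card_filter_not
      (s := posF L) (p := (· ≤ m))
    have hsubD : (posF L).filter (fun p => ¬ p ≤ m) ⊆ Finset.Icc (m + 1) (N - 1) := by
      intro p hp
      simp only [Finset.mem_filter] at hp
      have h1 := pos_ub hltN p hp.1
      simp only [Finset.mem_Icc]
      omega
    have hD := Finset.card_le_card hsubD
    rw [Nat.card_Icc] at hD
    have hcard := posF_card hHyp
    have hcrfl : c = ((posF L).filter (fun x => x ≤ m)).card := rfl
    have hN : 0 < N := Nat.pos_of_ne_zero (NeZero.ne N)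
    omega
  refine ⟨⟨k - c, by omega⟩, ⟨k + m - c, hbN⟩, ?_⟩
  have hsub : (Finset.Iic kf).image τ ⊆ Finset.Icc ⟨k - c, by omega⟩ ⟨k + m - c, hbN⟩ := by
    intro v hv
    simp only [Finset.mem_image] at hv
    obtain ⟨x, hx, rfl⟩ := hv
    simp only [Finset.mem_Iic] at hx
    have hxm : x.val ≤ m := hx
    have hgx : (τ x).val = g L x.val := by
      rw [show x = ⟨x.val, x.isLt⟩ from rfl, hτ, tau_apply N L hHyp hltN x.val x.isLt,
        G_eq_g L hHyp]
    have h1 : cnt L x.val ≤ c := cnt_mono hxm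
    have h2 : c ≤ cnt L x.val + (m - x.val) := cnt_diff hxm
    have h3 : cnt L x.val ≤ x.val := cnt_le_of_hyp hHyp x.val
    simp only [Finset.mem_Icc, Fin.le_def, hgx]
    unfold g
    split_ifs <;> constructor <;> simp <;> omega
  refine Finset.eq_of_subset_of_card_le hsub ?_
  rw [Finset.card_image_of_injective _ τ.injective, Fin.card_Iic, Fin.card_Icc]
  simp
  omega

section XiStruct
variable {N : ℕ} [NeZero N] (τ : Equiv.Perm (Fin N))

def lcnt (m : ℕ) : ℕ :=
  (Finset.univ.filter (fun x : Fin N => x.val ≤ m ∧ (τ x).val < (τ 0).val)).card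

lemma lcnt_mono {m m' : ℕ} (h : m ≤ m') : lcnt τ m ≤ lcnt τ m' := by
  apply Finset.card_le_card
  intro x hx
  simp only [Finset.mem_filter] at hx ⊢
  exact ⟨hx.1, le_trans hx.2.1 h, hx.2.2⟩

lemma lcnt_zero : lcnt τ 0 = 0 := by
  unfold lcnt
  rw [Finset.card_eq_zero, Finset.filter_eq_empty_iff]
  intro x _
  rintro ⟨h1, h2⟩
  have : x = 0 := by
    ext
    simpa using h1
  subst this
  omega

lemma lcnt_le_self {m : ℕ} (hm : m < N) : lcnt τ m ≤ m := by
  have hsub : Finset.univ.filter (fun x : Fin N => x.val ≤ m ∧ (τ x).val < (τ 0).val)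
      ⊆ (Finset.Iic (⟨m, hm⟩ : Fin N)).erase 0 := by
    intro x hx
    simp only [Finset.mem_filter] at hx
    simp only [Finset.mem_erase, Finset.mem_Iic]
    constructor
    · intro h0
      subst h0
      omega
    · exact hx.2.1
  have := Finset.card_le_card hsub
  rw [Finset.card_erase_of_mem (by simp [Fin.le_def]), Fin.card_Iic] at this
  have hval : ((⟨m, hm⟩ : Fin N)).val = m := rfl
  rw [hval] at this
  unfold lcnt
  omega

lemma lcnt_le_k {m : ℕ} : lcnt τ m ≤ (τ 0).val := by
  classical
  have hkN : (τ 0).val < N := (τ 0).isLt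
  have hinj : Set.InjOn τ (Finset.univ.filter
      (fun x : Fin N => x.val ≤ m ∧ (τ x).val < (τ 0).val)) := fun a _ b _ hab => τ.injective hab
  have h1 := Finset.card_image_of_injOn hinj
  have hsub : (Finset.univ.filter (fun x : Fin N => x.val ≤ m ∧ (τ x).val < (τ 0).val)).image τ
      ⊆ Finset.Iio ⟨(τ 0).val, hkN⟩ := by
    intro y hy
    simp only [Finset.mem_image, Finset.mem_filter] at hy
    obtain ⟨x, hx, rfl⟩ := hy
    simp only [Finset.mem_Iio, Fin.lt_def]
    exact hx.2.2
  have h2 := Finset.card_le_card hsub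
  rw [h1, Fin.card_Iio] at h2
  exact h2

lemma Iic_succ_fin {m : ℕ} (hm : m + 1 < N) :
    Finset.Iic (⟨m + 1, hm⟩ : Fin N) = insert ⟨m + 1, hm⟩ (Finset.Iic ⟨m, by omega⟩) := by
  ext x
  simp only [Finset.mem_Iic, Finset.mem_insert, Fin.le_def, Fin.ext_iff]
  omega

theorem Xi_struct (hτ : τ ∈ XiSet N) :
    ∀ m (hm : m < N), ∃ a b : Fin N,
      a.val = (τ 0).val - lcnt τ m ∧ b.val = (τ 0).val + m - lcnt τ m ∧
      (Finset.Iic (⟨m, hm⟩ : Fin N)).image τ = Finset.Icc a b ∧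
      (τ ⟨m, hm⟩).val =
        (if (τ ⟨m, hm⟩).val < (τ 0).val then (τ 0).val - lcnt τ m
         else (τ 0).val + m - lcnt τ m) := by
  set k := (τ 0).val with hk
  intro m
  induction m with
  | zero =>
    intro hm
    refine ⟨τ 0, τ 0, ?_, ?_, ?_, ?_⟩
    · rw [lcnt_zero]; omega
    · rw [lcnt_zero]; omega
    · have h0 : (⟨0, hm⟩ : Fin N) = 0 := by ext; simp
      rw [h0]
      have : Finset.Iic (0 : Fin N) = {0} := by
        ext x
        simp only [Finset.mem_Iic, Finset.mem_singleton, Fin.le_def, Fin.ext_iff, Fin.val_zero]; omega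
      rw [this, Finset.image_singleton, Finset.Icc_self]
    · have h0 : (⟨0, hm⟩ : Fin N) = 0 := by ext; simp
      rw [h0, lcnt_zero, if_neg (by omega)]
      omega
  | succ m ih =>
    intro hm
    have hmN : m < N := by omega
    obtain ⟨a', b', ha', hb', himg, _⟩ := ih hmN
    have hl_m : lcnt τ m ≤ m := lcnt_le_self τ hmN
    have hl_k : lcnt τ m ≤ k := lcnt_le_k τ
    -- the interval for m+1 exists by the Xi property
    obtain ⟨A, B, hAB⟩ := hτ ⟨m + 1, hm⟩ (by simp)
    -- cardinalities
    have hcard : (Finset.Icc A B).card = m + 2 := by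
      rw [← hAB, Finset.card_image_of_injective _ τ.injective, Fin.card_Iic]
    have hABle : A ≤ B := by
      by_contra hc
      rw [Finset.Icc_eq_empty hc] at hcard
      simp at hcard
    have hBA : B.val = A.val + (m + 1) := by
      rw [Fin.card_Icc] at hcard
      have := hABle
      rw [Fin.le_def] at this
      omega
    -- previous interval is inside
    have hsub : Finset.Icc a' b' ⊆ Finset.Icc A B := by
      rw [← himg, ← hAB]
      apply Finset.image_subset_image
      intro x hx
      simp only [Finset.mem_Iic, Fin.le_def] at hx ⊢
      omega
    have ha'b' : a' ≤ b' := by rw [Fin.le_def]; omega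
    have hAa : A ≤ a' ∧ b' ≤ B := by
      have h1 : a' ∈ Finset.Icc A B := hsub (Finset.mem_Icc.mpr ⟨le_refl _, ha'b'⟩)
      have h2 : b' ∈ Finset.Icc A B := hsub (Finset.mem_Icc.mpr ⟨ha'b', le_refl _⟩)
      simp only [Finset.mem_Icc] at h1 h2
      exact ⟨h1.1, h2.2⟩
    -- τ (m+1) is in the new interval but not the old image
    have hmem : τ ⟨m + 1, hm⟩ ∈ Finset.Icc A B := by
      rw [← hAB]
      exact Finset.mem_image_of_mem _ (by simp)
    have hnotm : τ ⟨m + 1, hm⟩ ∉ (Finset.Iic (⟨m, hmN⟩ : Fin N)).image τ := by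
      intro hc
      have heq : (Finset.Iic (⟨m+1, hm⟩ : Fin N)).image τ
          = (Finset.Iic (⟨m, hmN⟩ : Fin N)).image τ := by
        rw [Iic_succ_fin hm, Finset.image_insert, Finset.insert_eq_self.mpr hc]
      have hc1 : ((Finset.Iic (⟨m+1, hm⟩ : Fin N)).image τ).card = m + 2 := by
        rw [Finset.card_image_of_injective _ τ.injective, Fin.card_Iic]
      have hc2 : ((Finset.Iic (⟨m, hmN⟩ : Fin N)).image τ).card = m + 1 := by
        rw [Finset.card_image_of_injective _ τ.injective, Fin.card_Iic]
      rw [heq, hc2] at hc1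
      omega
    have hnotIcc : τ ⟨m + 1, hm⟩ ∉ Finset.Icc a' b' := by rw [← himg]; exact hnotm
    -- the new point
    have himg' : (Finset.Iic (⟨m+1, hm⟩ : Fin N)).image τ
        = insert (τ ⟨m+1, hm⟩) ((Finset.Iic (⟨m, hmN⟩ : Fin N)).image τ) := by
      rw [Iic_succ_fin hm, Finset.image_insert]
    set v := (τ ⟨m+1, hm⟩).val with hv
    have hvmem : A.val ≤ v ∧ v ≤ B.val := by
      have := Finset.mem_Icc.mp hmem
      rw [Fin.le_def, Fin.le_def] at this
      exact this
    have hvnot : ¬ (a'.val ≤ v ∧ v ≤ b'.val) := by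
      intro hc
      exact hnotIcc (Finset.mem_Icc.mpr ⟨by rw [Fin.le_def]; omega, by rw [Fin.le_def]; omega⟩)
    -- case split
    rw [Fin.le_def] at hABle
    by_cases hA : A.val = a'.val
    · -- right extension: v = B.val > k
      have hvB : v = B.val := by omega
      have hvk : ¬ v < k := by omega
      have hlcnt : lcnt τ (m + 1) = lcnt τ m := by
        unfold lcnt
        congr 1
        ext x
        simp only [Finset.mem_filter, Finset.mem_univ, true_and]
        constructor
        · rintro ⟨h1, h2⟩
          refine ⟨?_, h2⟩
          rcases Nat.lt_or_ge x.val (m+1) with h' | h'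
          · omega
          · exfalso
            have hxeq : x = ⟨m+1, hm⟩ := Fin.ext (show x.val = m + 1 by omega)
            rw [hxeq] at h2
            omega
        · rintro ⟨h1, h2⟩
          exact ⟨by omega, h2⟩
      refine ⟨A, B, ?_, ?_, hAB, ?_⟩
      · rw [hlcnt]; omega
      · rw [hlcnt]; omega
      · rw [hlcnt, if_neg hvk]; omega
    · -- left extension: v = A.val = a'.val - 1 < k
      have hAlt : A.val < a'.val := by omega
      have hBb : B.val = b'.val := by omega
      have hAa' : A.val = a'.val - 1 ∧ 1 ≤ a'.val := by omega
      have hvA : v = A.val := by omega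
      have hvk : v < k := by omega
      have hlcnt : lcnt τ (m + 1) = lcnt τ m + 1 := by
        unfold lcnt
        have hins : Finset.univ.filter (fun x : Fin N => x.val ≤ m + 1 ∧ (τ x).val < k)
            = insert ⟨m+1, hm⟩ (Finset.univ.filter (fun x : Fin N => x.val ≤ m ∧ (τ x).val < k)) := by
          ext x
          simp only [Finset.mem_filter, Finset.mem_univ, true_and, Finset.mem_insert]
          constructor
          · rintro ⟨h1, h2⟩
            rcases Nat.lt_or_ge x.val (m+1) with h' | h'
            · exact Or.inr ⟨by omega, h2⟩
            · exact Or.inl (Fin.ext (show x.val = m + 1 by omega))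
          · rintro (rfl | ⟨h1, h2⟩)
            · exact ⟨le_refl _, by omega⟩
            · exact ⟨by omega, h2⟩
        rw [hins, Finset.card_insert_of_notMem (by simp)]
      refine ⟨A, B, ?_, ?_, hAB, ?_⟩
      · rw [hlcnt]; omega
      · rw [hlcnt]; omega
      · rw [hlcnt, if_pos hvk]; omega
end XiStruct

/-- `bl F k = [F (k-1) + (k-1), ..., F 1 + 1, F 0 + 0]`. -/
def bl (F : ℕ → ℕ) : ℕ → List ℕ
  | 0 => []
  | k + 1 => (F k + k) :: bl F k

@[simp] lemma bl_length (F : ℕ → ℕ) (k : ℕ) : (bl F k).length = k := by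
  induction k with
  | zero => rfl
  | succ k ih => simp [bl, ih]

lemma bl_mem {F : ℕ → ℕ} {k : ℕ} {y : ℕ} : y ∈ bl F k ↔ ∃ s < k, y = F s + s := by
  induction k with
  | zero => simp [bl]
  | succ k ih =>
    simp only [bl, List.mem_cons, ih]
    constructor
    · rintro (rfl | ⟨s, hs, rfl⟩)
      · exact ⟨k, by omega, rfl⟩
      · exact ⟨s, by omega, rfl⟩
    · rintro ⟨s, hs, rfl⟩
      rcases Nat.lt_or_ge s k with h' | h'
      · exact Or.inr ⟨s, h', rfl⟩
      · have : s = k := by omega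
        subst this
        exact Or.inl rfl
lemma posF_bl (F : ℕ → ℕ) (k : ℕ) : posF (bl F k) = (Finset.range k).image F := by
  induction k with
  | zero => simp [bl, posF]
  | succ k ih =>
    show insert (F k + k - (bl F k).length) (posF (bl F k)) = _
    rw [bl_length, ih, Finset.range_add_one, Finset.image_insert]
    congr 1
    omega

lemma bl_get (F : ℕ → ℕ) (k : ℕ) (i : ℕ) (hik : i < k) (hi : i < (bl F k).length) :
    (bl F k).get ⟨i, hi⟩ = F (k - 1 - i) + (k - 1 - i) := by
  induction k generalizing i with
  | zero => omega
  | succ k ih =>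
    match i with
    | 0 => simp [bl]
    | i + 1 =>
      have hik' : i < k := by omega
      have hi' : i < (bl F k).length := by rw [bl_length]; exact hik'
      have : (bl F (k+1)).get ⟨i+1, hi⟩ = (bl F k).get ⟨i, hi'⟩ := rfl
      rw [this, ih i hik' hi']
      have h2 : k + 1 - 1 - (i + 1) = k - 1 - i := by omega
      rw [h2]

lemma bl_head (F : ℕ → ℕ) (k : ℕ) (h : bl F k ≠ []) :
    (bl F k).head h = F (k-1) + (k-1) ∧ 0 < k := by
  match k with
  | 0 => simp [bl] at h
  | k + 1 =>
    refine ⟨?_, by omega⟩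
    show F k + k = F (k + 1 - 1) + (k + 1 - 1)
    norm_num

lemma bl_sorted (F : ℕ → ℕ) : ∀ k, (∀ s s', s ≤ s' → s' < k → F s' + s' ≤ F s + s) →
    (bl F k).Pairwise (· ≤ ·) := by
  intro k
  induction k with
  | zero => intro _; simp [bl]
  | succ k ih =>
    intro h
    rw [bl, List.pairwise_cons]
    refine ⟨?_, ih (fun s s' h1 h2 => h s s' h1 (by omega))⟩
    intro y hy
    obtain ⟨s, hs, rfl⟩ := bl_mem.mp hy
    exact h s k (by omega) (by omega)

/-- positions of a good list: the element at index `i` yields position with count `i+1`. -/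
lemma g_pos : ∀ (L : List ℕ), Hyp L → ∀ i (hi : i < L.length),
    (L.get ⟨i, hi⟩ - (L.length - 1 - i)) ∈ posF L ∧
      cnt L (L.get ⟨i, hi⟩ - (L.length - 1 - i)) = i + 1 := by
  intro L
  induction L with
  | nil => intro _ i hi; simp at hi
  | cons e M ih =>
    intro h i hi
    obtain ⟨hM, hae, hmono⟩ := hyp_cons h
    have hlb := pos_lb M hM.1 e hmono hae
    match i with
    | 0 =>
      have hget : (e :: M).get ⟨0, hi⟩ = e := rfl
      have hlen : (e :: M).length - 1 - 0 = M.length := by simp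
      rw [hget, hlen]
      constructor
      · exact Finset.mem_insert_self _ _
      · unfold cnt
        show ((insert (e - M.length) (posF M)).filter (· ≤ e - M.length)).card = 1
        rw [Finset.filter_insert, if_pos (by omega)]
        have hemp : (posF M).filter (· ≤ e - M.length) = ∅ := by
          rw [Finset.filter_eq_empty_iff]
          intro p hp
          have := hlb p hp
          omega
        rw [hemp]
        simp
    | i + 1 =>
      have hiM : i < M.length := by simpa using hi
      have hget : (e :: M).get ⟨i+1, hi⟩ = M.get ⟨i, hiM⟩ := rfl
      have hlen : (e :: M).length - 1 - (i+1) = M.length - 1 - i := by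
        simp only [List.length_cons]; omega
      rw [hget, hlen]
      obtain ⟨hmem, hcnt⟩ := ih hM i hiM
      have hgt : e - M.length < M.get ⟨i, hiM⟩ - (M.length - 1 - i) := hlb _ hmem
      constructor
      · exact Finset.mem_insert_of_mem hmem
      · unfold cnt
        show ((insert (e - M.length) (posF M)).filter (· ≤ _)).card = i + 2
        rw [Finset.filter_insert, if_pos (by omega)]
        rw [Finset.card_insert_of_notMem]
        · unfold cnt at hcnt
          omega
        · intro hc
          have h1 := (Finset.mem_filter.mp hc).1
          have := hlb _ h1
          omega

/-! ### Part B -/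
section PartB
variable {N : ℕ} [NeZero N] (τ : Equiv.Perm (Fin N))

/-- the endpoint data recovered from a permutation. -/
def blF (s : ℕ) : ℕ := (τ⁻¹ ((s : ℕ) : Fin N)).val

def buildL : List ℕ := bl (blF τ) ((τ 0).val)

lemma buildL_def : buildL τ = bl (blF τ) ((τ 0).val) := rfl

lemma blF_lt (s : ℕ) : blF τ s < N := (τ⁻¹ ((s : ℕ) : Fin N)).isLt

lemma hF_apply {s : ℕ} (hs : s < (τ 0).val) :
    τ ⟨blF τ s, blF_lt τ s⟩ = ⟨s, lt_trans hs (τ 0).isLt⟩ := by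
  have hsN : s < N := lt_trans hs (τ 0).isLt
  have hcast : ((s : ℕ) : Fin N) = ⟨s, hsN⟩ := by
    ext; rw [Fin.val_natCast]; exact Nat.mod_eq_of_lt hsN
  have : (⟨blF τ s, blF_lt τ s⟩ : Fin N) = τ⁻¹ ((s : ℕ) : Fin N) := by
    ext; rfl
  rw [this, Equiv.Perm.coe_inv, Equiv.apply_symm_apply, hcast]

lemma lcnt_F (hτ : τ ∈ XiSet N) {s : ℕ} (hs : s < (τ 0).val) :
    lcnt τ (blF τ s) = (τ 0).val - s ∧ blF τ s + s < N ∧ 1 ≤ blF τ s := by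
  set k := (τ 0).val with hk
  set m := blF τ s with hmdef
  have hm : m < N := blF_lt τ s
  obtain ⟨a, b, ha, hb, _, hptw⟩ := Xi_struct τ hτ m hm
  have hτm : (τ ⟨m, hm⟩).val = s := by rw [hF_apply τ hs]
  rw [hτm, if_pos hs] at hptw
  have hlk : lcnt τ m ≤ k := lcnt_le_k τ
  have h1 : lcnt τ m = k - s := by omega
  refine ⟨h1, ?_, ?_⟩
  · have := b.isLt
    omega
  · by_contra hc
    have hm0 : m = 0 := by omega
    have : (⟨m, hm⟩ : Fin N) = 0 := by ext; simp [hm0]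
    rw [this] at hτm
    omega

lemma F_anti (hτ : τ ∈ XiSet N) {s s' : ℕ} (h : s < s') (h' : s' < (τ 0).val) :
    blF τ s' < blF τ s := by
  have h1 := (lcnt_F τ hτ (lt_trans h h')).1
  have h2 := (lcnt_F τ hτ h').1
  by_contra hc
  have := lcnt_mono τ (show blF τ s ≤ blF τ s' by omega)
  omega

lemma F_gap (hτ : τ ∈ XiSet N) : ∀ d s, s + d < (τ 0).val →
    blF τ (s + d) + d ≤ blF τ s := by
  intro d
  induction d with
  | zero => intro s _; simp
  | succ d ih =>
    intro s hsd
    have h1 := F_anti τ hτ (show s + d < s + (d+1) by omega) (by omega)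
    have h2 := ih s (by omega)
    have : s + (d + 1) = (s + d) + 1 := by omega
    rw [this] at h1 ⊢
    omega

lemma buildL_good (hτ : τ ∈ XiSet N) : GoodList N (buildL τ) := by
  set k := (τ 0).val with hk
  refine ⟨?_, ?_, ?_, ?_⟩
  · rw [buildL_def, bl_length]; exact (τ 0).isLt
  · apply bl_sorted
    intro s s' hss' hs'
    rcases Nat.eq_or_lt_of_le hss' with rfl | hlt
    · omega
    · have := F_gap τ hτ (s' - s) s (by omega)
      rw [show s + (s' - s) = s' by omega] at this
      omega
  · intro x hx
    rw [buildL_def] at hx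
    obtain ⟨s, hs, rfl⟩ := bl_mem.mp hx
    exact (lcnt_F τ hτ hs).2.1
  · intro hne
    have hne' : bl (blF τ) ((τ 0).val) ≠ [] := hne
    obtain ⟨hh, hkpos⟩ := bl_head _ _ hne'
    have hlen2 : (buildL τ).length = k := by rw [buildL_def, bl_length, hk]
    have hhead2 : (buildL τ).head hne = blF τ (k - 1) + (k - 1) := hh
    rw [hlen2, hhead2]
    have := (lcnt_F τ hτ (show k - 1 < k by omega)).2.2
    omega

lemma mem_posF_iff (hτ : τ ∈ XiSet N) (x : Fin N) :
    x.val ∈ posF (buildL τ) ↔ (τ x).val < (τ 0).val := by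
  set k := (τ 0).val with hk
  rw [buildL_def, posF_bl]
  simp only [Finset.mem_image, Finset.mem_range]
  constructor
  · rintro ⟨s, hs, hFs⟩
    have := hF_apply τ (show s < k from hs)
    have hx : x = ⟨blF τ s, blF_lt τ s⟩ := by ext; rw [← hFs]
    rw [hx, this]
    exact hs
  · intro hlt
    refine ⟨(τ x).val, hlt, ?_⟩
    have hsN : (τ x).val < N := (τ x).isLt
    have hcast : (((τ x).val : ℕ) : Fin N) = τ x := by
      ext; rw [Fin.val_natCast]; exact Nat.mod_eq_of_lt hsN
    rw [blF, hcast, Equiv.Perm.coe_inv, Equiv.symm_apply_apply]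

lemma cnt_buildL (hτ : τ ∈ XiSet N) (m : ℕ) : cnt (buildL τ) m = lcnt τ m := by
  set k := (τ 0).val with hk
  unfold cnt lcnt
  rw [← hk]
  symm
  apply Finset.card_bij (fun (x : Fin N) _ => x.val)
  · intro x hx
    simp only [Finset.mem_filter, Finset.mem_univ, true_and] at hx
    simp only [Finset.mem_filter]
    exact ⟨(mem_posF_iff τ hτ x).mpr hx.2, hx.1⟩
  · intro x _ y _ hxy
    exact Fin.ext hxy
  · intro p hp
    simp only [Finset.mem_filter] at hp
    have hpN : p < N := by
      rw [buildL_def, posF_bl] at hp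
      obtain ⟨s, _, rfl⟩ := Finset.mem_image.mp hp.1
      exact blF_lt τ s
    refine ⟨⟨p, hpN⟩, ?_, rfl⟩
    simp only [Finset.mem_filter, Finset.mem_univ, true_and]
    exact ⟨hp.2, (mem_posF_iff τ hτ ⟨p, hpN⟩).mp hp.1⟩

lemma buildL_tau (hτ : τ ∈ XiSet N) : tauOfList N (buildL τ) = τ := by
  set k := (τ 0).val with hk
  have hgood := buildL_good τ hτ
  obtain ⟨hlen, hsort, hltN, hhead⟩ := hgood
  have hHyp : Hyp (buildL τ) := ⟨hsort, hhead⟩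
  apply Equiv.ext
  intro x
  have hx : x = ⟨x.val, x.isLt⟩ := by ext; rfl
  rw [hx]
  apply Fin.ext
  rw [tau_apply N _ hHyp hltN x.val x.isLt, G_eq_g _ hHyp]
  obtain ⟨a, b, ha, hb, _, hptw⟩ := Xi_struct τ hτ x.val x.isLt
  rw [← hx] at hptw ⊢
  unfold g
  rw [cnt_buildL τ hτ, buildL_def, bl_length, ← hk]
  have hmemiff := mem_posF_iff τ hτ x
  rw [buildL_def] at hmemiff
  have hlk : lcnt τ x.val ≤ k := lcnt_le_k τ
  by_cases hmem : x.val ∈ posF (bl (blF τ) k)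
  · rw [if_pos hmem, hptw, if_pos (hmemiff.mp hmem)]
  · rw [if_neg hmem, hptw, if_neg (fun hc => hmem (hmemiff.mpr hc))]
    omega

lemma get_gt {L : List ℕ} (h : Hyp L) (i : ℕ) (hi : i < L.length) :
    L.length - 1 - i < L.get ⟨i, hi⟩ := by
  match L with
  | e :: M =>
    have hhead := h.2 (by simp)
    simp only [List.head_cons] at hhead
    have : e ≤ (e :: M).get ⟨i, hi⟩ := by
      match i with
      | 0 => exact le_refl e
      | i + 1 =>
        have hiM : i < M.length := by simpa using hi
        have hmem : (e :: M).get ⟨i+1, hi⟩ ∈ M := by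
          show M.get ⟨i, hiM⟩ ∈ M
          exact M.get_mem _
        have hs := h.1
        rw [List.pairwise_cons] at hs
        exact hs.1 _ hmem
    omega

lemma recon {L : List ℕ} (h : GoodList N L) : buildL (tauOfList N L) = L := by
  obtain ⟨hlen, hsort, hltN, hhead⟩ := h
  have hHyp : Hyp L := ⟨hsort, hhead⟩
  set τ' := tauOfList N L with hτ'
  have hN : 0 < N := Nat.pos_of_ne_zero (NeZero.ne N)
  set k := L.length with hkdef
  -- τ' 0 = k
  have hcnt0 : cnt L 0 = 0 := by
    unfold cnt
    rw [Finset.card_eq_zero, Finset.filter_eq_empty_iff]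
    intro p hp
    have := pos_pos hHyp p hp
    omega
  have h0mem : (0 : ℕ) ∉ posF L := fun hc => absurd (pos_pos hHyp 0 hc) (lt_irrefl 0)
  have hg0 : g L 0 = k := by
    unfold g
    rw [if_neg h0mem, hcnt0]
    omega
  have hzero : (0 : Fin N) = ⟨0, hN⟩ := by ext; rfl
  have hτ0 : (τ' 0).val = k := by
    rw [hzero, tau_apply N L hHyp hltN 0 hN, G_eq_g L hHyp, hg0]
  -- lengths agree
  apply List.ext_get
  · rw [buildL_def, hτ0, bl_length]
  · intro i hi1 hi2
    have hik : i < k := by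
      rw [buildL_def, bl_length, hτ0] at hi1
      exact hi1
    have h1 := bl_get (blF τ') ((τ' 0).val) i (by rw [hτ0]; exact hik)
      (by rw [← buildL_def]; exact hi1)
    rw [show ((bl (blF τ') ((τ' 0).val)).get ⟨i, _⟩)
        = (buildL τ').get ⟨i, hi1⟩ from rfl] at h1
    conv at h1 => rhs; rw [hτ0]
    rw [h1]
    -- now compute the entry via the position of index i
    set mi := L.get ⟨i, hi2⟩ - (k - 1 - i) with hmi
    obtain ⟨hmem, hcntm⟩ := g_pos L hHyp i hi2
    have hgetlt : L.get ⟨i, hi2⟩ < N := hltN _ (L.get_mem _)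
    have hmiN : mi < N := by omega
    have hgget : L.get ⟨i, hi2⟩ > k - 1 - i := get_gt hHyp i hi2
    have hcle : cnt L mi ≤ k := by
      have h1 : cnt L mi ≤ (posF L).card := Finset.card_filter_le _ _
      have h2 := posF_card hHyp
      omega
    have hgmi : g L mi = k - 1 - i := by
      unfold g
      rw [if_pos hmem, hcntm]
      omega
    have hτmi : (τ' ⟨mi, hmiN⟩).val = k - 1 - i := by
      rw [tau_apply N L hHyp hltN mi hmiN, G_eq_g L hHyp, hgmi]
    have hkiN : k - 1 - i < N := by omega
    have hcast : ((k - 1 - i : ℕ) : Fin N) = ⟨k - 1 - i, hkiN⟩ := by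
      ext; rw [Fin.val_natCast]; exact Nat.mod_eq_of_lt hkiN
    have hinv : τ'⁻¹ ((k - 1 - i : ℕ) : Fin N) = ⟨mi, hmiN⟩ := by
      rw [hcast]
      apply τ'.injective
      rw [Equiv.Perm.coe_inv, Equiv.apply_symm_apply]
      ext
      rw [hτmi]
    have hblF : blF τ' (k - 1 - i) = mi := by
      rw [blF, hinv]
    rw [hblF]
    omega

end PartB

/-- Every permutation `τ_{(j_k,...,j_1)}` built from admissible data belongs to
Ξ_N, and every element of Ξ_N arises this way from a unique choice of data. -/
theorem tau_mem_Xi_and_unique (N : ℕ) [NeZero N] :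
    (∀ L : List ℕ, GoodList N L → tauOfList N L ∈ XiSet N) ∧
    (∀ τ ∈ XiSet N, ∃! L : List ℕ, GoodList N L ∧ tauOfList N L = τ) := by
  constructor
  · exact fun L hL => part_A N L hL
  · intro τ hτ
    refine ⟨buildL τ, ⟨buildL_good τ hτ, buildL_tau τ hτ⟩, ?_⟩
    rintro L' ⟨hg', rfl⟩
    exact (recon hg').symm
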